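/- Let e, k, j, n be positive integers with n ≥ 2, j ≥ 2, j + k ≤ e - 1, 2k > e, satisfying (n-1)(e-2) + (n-1)j < nk ≤ (n-1)e + nj - (2n-1) (so that S_k^e(j) has Frobenius number ne+nj+nk-1 and genus n²k - n(n-1)j - (n-1)²e + (n-1)(2n-1) + e - 1). Then S_k^e(j) is not symmetric. -/

import Mathlib

/-- The set of gaps of a numerical semigroup (submonoid of ℕ). -/
def gapsOf (S : AddSubmonoid ℕ) : Set ℕ := {n | n ∉ S}

/-- The Frobenius number: the largest gap. -/
noncomputable def frobeniusNumber (S : AddSubmonoid ℕ) : ℕ := sSup (gapsOf S)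

/-- The genus: the number of gaps. -/
noncomputable def genusOf (S : AddSubmonoid ℕ) : ℕ := Nat.card (gapsOf S)

/-- A numerical semigroup is symmetric iff 2g = F + 1. -/
def IsSymmetricNS (S : AddSubmonoid ℕ) : Prop :=
  2 * genusOf S = frobeniusNumber S + 1

/-- The Sally type semigroup `S_k^e(j) = ⟨e,…,e+j-1, e+j+k,…,2e-1⟩`. -/
def sally (e k j : ℕ) : AddSubmonoid ℕ :=
  AddSubmonoid.closure (Set.Ico e (e + j) ∪ Set.Ico (e + j + k) (2 * e))

lemma mem_closure_Icc {u v : ℕ} (huv : u ≤ v) :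
    ∀ (a x : ℕ), a * u ≤ x → x ≤ a * v → x ∈ AddSubmonoid.closure (Set.Icc u v) := by
  intro a
  induction a with
  | zero => intro x h1 h2; simp only [Nat.zero_mul, Nat.le_zero] at h2; subst h2; exact zero_mem _
  | succ a ih =>
    intro x h1 h2
    simp only [Nat.succ_mul] at h1 h2
    rcases max_cases u (x - a*v) with ⟨hcm, hcle⟩ | ⟨hcm, hclt⟩
    · have : x = (x - u) + u := by omega
      rw [this]
      exact add_mem (ih _ (by omega) (by omega)) (AddSubmonoid.subset_closure ⟨le_refl u, huv⟩)
    · have hcv : x - a*v ≤ v := by omega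
      have : x = a*v + (x - a*v) := by omega
      rw [this]
      exact add_mem (ih _ (Nat.mul_le_mul_left a huv) (le_refl _))
        (AddSubmonoid.subset_closure ⟨by omega, hcv⟩)

lemma sally_mem (e k j a b x : ℕ) (hj : 1 ≤ j) (he : 1 ≤ e) (hs : e + j + k < 2 * e)
    (h1 : a * e + b * (e + j + k) ≤ x)
    (h2 : x + a + b ≤ a * (e + j) + b * (2 * e)) :
    x ∈ sally e k j := by
  have key : ∀ x1 x2 : ℕ, a * e ≤ x1 → x1 + a ≤ a * (e + j) →
      b * (e + j + k) ≤ x2 → x2 + b ≤ b * (2 * e) → x1 + x2 ∈ sally e k j := by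
    intro x1 x2 hx1l hx1u hx2l hx2u
    have hj' : e ≤ e + j - 1 := by omega
    have hk' : e + j + k ≤ 2 * e - 1 := by omega
    have m1 : x1 ∈ AddSubmonoid.closure (Set.Icc e (e + j - 1)) := by
      apply mem_closure_Icc hj' a x1 hx1l
      have : a * (e + j - 1) + a = a * (e + j) := by
        have h11 : e + j - 1 + 1 = e + j := by omega
        calc a * (e + j - 1) + a = a * (e + j - 1 + 1) := by rw [Nat.mul_succ]
        _ = a * (e + j) := by rw [h11]
      omega
    have m2 : x2 ∈ AddSubmonoid.closure (Set.Icc (e + j + k) (2 * e - 1)) := by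
      apply mem_closure_Icc hk' b x2 hx2l
      have : b * (2 * e - 1) + b = b * (2 * e) := by
        have h21 : 2 * e - 1 + 1 = 2 * e := by omega
        calc b * (2 * e - 1) + b = b * (2 * e - 1 + 1) := by rw [Nat.mul_succ]
        _ = b * (2 * e) := by rw [h21]
      omega
    have s1 : Set.Icc e (e + j - 1) ⊆ Set.Ico e (e + j) ∪ Set.Ico (e + j + k) (2 * e) := by
      intro y hy; simp only [Set.mem_Icc] at hy; exact Or.inl ⟨hy.1, by omega⟩
    have s2 : Set.Icc (e + j + k) (2 * e - 1) ⊆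
        Set.Ico e (e + j) ∪ Set.Ico (e + j + k) (2 * e) := by
      intro y hy; simp only [Set.mem_Icc] at hy; exact Or.inr ⟨hy.1, by omega⟩
    exact add_mem (AddSubmonoid.closure_mono s1 m1) (AddSubmonoid.closure_mono s2 m2)
  have haa : a ≤ a * (e + j) := le_mul_of_one_le_right (Nat.zero_le _) (by omega)
  have hbb : b ≤ b * (2 * e) := le_mul_of_one_le_right (Nat.zero_le _) (by omega)
  rcases le_total (a * (e + j) - a) (x - b * (e + j + k)) with h | h
  · have hb : b * (e + j + k) ≤ x := le_trans (Nat.le_add_left _ _) h1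
    have hae : a * e ≤ a * (e + j) - a := by
      have := Nat.mul_le_mul_left a (show e + 1 ≤ e + j by omega)
      rw [Nat.mul_succ] at this
      omega
    have hx : x = (a * (e + j) - a) + (x - (a * (e + j) - a)) := by
      have : a * (e+j) - a ≤ x - b * (e+j+k) := h
      omega
    rw [hx]
    apply key _ _ hae (by omega) (by omega) (by omega)
  · have hb : b * (e + j + k) ≤ x := le_trans (Nat.le_add_left _ _) h1
    have hx : x = (x - b * (e + j + k)) + b * (e + j + k) := by omega
    rw [hx]
    apply key _ _ (by omega) (by omega) (le_refl _)
    have := Nat.mul_le_mul_left b (show e + j + k + 1 ≤ 2 * e by omega)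
    rw [Nat.mul_succ] at this
    omega

lemma sally_bound (e k j x : ℕ) (hx : x ∈ sally e k j) :
    ∃ a b : ℕ, a * e + b * (e + j + k) ≤ x ∧ x + a + b ≤ a * (e + j) + b * (2 * e) := by
  induction hx using AddSubmonoid.closure_induction with
  | mem y hy =>
    rcases hy with hy | hy
    · exact ⟨1, 0, by simpa using hy.1, by simpa using hy.2⟩
    · exact ⟨0, 1, by simpa using hy.1, by simpa using hy.2⟩
  | zero => exact ⟨0, 0, by simp, by simp⟩
  | add y z _ _ hy hz =>
    obtain ⟨a1, b1, hy1, hy2⟩ := hy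
    obtain ⟨a2, b2, hz1, hz2⟩ := hz
    refine ⟨a1 + a2, b1 + b2, ?_, ?_⟩ <;> simp only [Nat.add_mul] <;> omega

/-- Core arithmetic: no representation hits `n*(e+j+k) - c` for `c = 1` or `c = e`. -/
lemma gap_core_int (T j k n a b c : ℤ) (hT : 0 ≤ T) (hj : 2 ≤ j) (hk : 1 ≤ k)
    (ha : 0 ≤ a) (hb : 0 ≤ b)
    (h1 : (n-1)*(T+j+k-1) + (n-1)*j < n*k)
    (hc : c = 1 ∨ c = T+j+k+1)
    (hL : a*(T+j+k+1) + b*(T+2*j+2*k+1) + c ≤ n*(T+2*j+2*k+1))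
    (hU : n*(T+2*j+2*k+1) + a + b ≤ a*(T+2*j+k+1) + b*(2*T+2*j+2*k+2) + c) : False := by
  have hs : (0:ℤ) < T+2*j+2*k+1 := by linarith
  have he : (0:ℤ) < T+j+k+1 := by linarith
  have hc1 : 1 ≤ c := by rcases hc with rfl|rfl <;> linarith
  have hce : c ≤ T+j+k+1 := by rcases hc with rfl|rfl <;> linarith
  have hbn : b < n := by nlinarith
  set d := n - b with hd
  have hd1 : 1 ≤ d := by omega
  have haL : a*(T+j+k+1) + c ≤ d*(T+2*j+2*k+1) := by nlinarith
  have ha2 : a ≤ 2*d - 1 := by nlinarith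
  have hU' : d*(T+2*j+2*k+1) ≤ a*(T+2*j+k) + b*T + c := by nlinarith
  rcases eq_or_lt_of_le ha2 with rfl | ha3
  · rcases hc with rfl | rfl
    · have hdn : d ≤ n := by omega
      nlinarith [(n-d)*(2*j-1), mul_nonneg (sub_nonneg.mpr hdn) (by linarith : (0:ℤ) ≤ 2*j-1)]
    · nlinarith
  · have ha4 : a ≤ 2*d-2 := by omega
    have hdn : d ≤ n := by omega
    nlinarith [mul_nonneg (sub_nonneg.mpr hdn) (by linarith : (0:ℤ) ≤ j - 2),
      mul_le_mul_of_nonneg_right ha4 (by linarith : (0:ℤ) ≤ T+2*j+k),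
      mul_nonneg (sub_nonneg.mpr hdn) hT]

lemma gap_core (e k j n a b c : ℕ) (hn : 2 ≤ n) (hj : 2 ≤ j) (hk : 1 ≤ k)
    (hjk : j + k + 1 ≤ e)
    (h1 : (n-1)*(e-2) + (n-1)*j < n*k)
    (hc : c = 1 ∨ c = e)
    (hL : a*e + b*(e+j+k) + c ≤ n*(e+j+k))
    (hU : n*(e+j+k) + a + b ≤ a*(e+j) + b*(2*e) + c) : False := by
  obtain ⟨T, rfl⟩ : ∃ T, e = T + (j + k + 1) := ⟨e - (j+k+1), by omega⟩
  have h1' : ((n:ℤ)-1)*((T:ℤ)+j+k-1) + ((n:ℤ)-1)*j < (n:ℤ)*k := by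
    have hn1 : 1 ≤ n := by omega
    have he2 : 2 ≤ T + (j + k + 1) := by omega
    zify [hn1, he2] at h1
    push_cast at h1 ⊢
    linarith
  have hcz : (c:ℤ) = 1 ∨ (c:ℤ) = (T:ℤ)+j+k+1 := by
    rcases hc with rfl | rfl
    · left; norm_num
    · right; push_cast; ring
  have hLz : (a:ℤ)*((T:ℤ)+j+k+1) + (b:ℤ)*((T:ℤ)+2*j+2*k+1) + c ≤ (n:ℤ)*((T:ℤ)+2*j+2*k+1) := by
    have := hL; zify at this; push_cast at this ⊢; linarith
  have hUz : (n:ℤ)*((T:ℤ)+2*j+2*k+1) + a + b ≤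
      (a:ℤ)*((T:ℤ)+2*j+k+1) + (b:ℤ)*(2*(T:ℤ)+2*j+2*k+2) + c := by
    have := hU; zify at this; push_cast at this ⊢; linarith
  exact gap_core_int (T:ℤ) j k n a b c (by positivity) (by exact_mod_cast hj)
    (by exact_mod_cast hk) (by positivity) (by positivity) h1' hcz hLz hUz

lemma chain_int (E J K I M : ℤ) (hj : 2 ≤ J) (hk : 0 ≤ K) (hE : J + K + 1 ≤ E)
    (hI : 0 ≤ I) (hM : 0 ≤ M) :
    2*(I+1)*E + M*(E+J+K) + (M+I+1) + I ≤ 2*I*(E+J) + (M+1)*(2*E) + 1 := by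
  nlinarith [mul_le_mul_of_nonneg_left hE hM, mul_nonneg hI (by linarith : (0:ℤ) ≤ J - 1)]

lemma sally_cover (e k j n : ℕ) (hj : 2 ≤ j) (he : 1 ≤ e) (hjk : j + k + 1 ≤ e) :
    ∀ i, i ≤ n → ∀ x, n*(e+j+k) ≤ x → x + n + i ≤ 2*i*(e+j) + (n-i)*(2*e) →
      x ∈ sally e k j := by
  intro i
  induction i with
  | zero =>
    intro _ x hl hu
    apply sally_mem e k j 0 n x (by omega) he (by omega) (by simpa using hl)
    simpa using hu
  | succ i ih =>
    intro hin x hl hu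
    by_cases hcase : x + n + i ≤ 2*i*(e+j) + (n-i)*(2*e)
    · exact ih (by omega) x hl hcase
    · push_neg at hcase
      -- chaining: lower bound for level i+1
      have hchain : 2*(i+1)*e + (n-(i+1))*(e+j+k) + n + i ≤
          2*i*(e+j) + (n-i)*(2*e) + 1 := by
        obtain ⟨m, hm⟩ : ∃ m, n = m + (i + 1) := ⟨n - (i+1), by omega⟩
        subst hm
        have e1 : m + (i+1) - (i+1) = m := by omega
        have e2 : m + (i+1) - i = m + 1 := by omega
        rw [e1, e2]
        have hz := chain_int (e:ℤ) (j:ℤ) (k:ℤ) (i:ℤ) (m:ℤ)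
          (by exact_mod_cast hj) (by positivity) (by exact_mod_cast hjk)
          (by positivity) (by positivity)
        zify
        linarith [hz]
      apply sally_mem e k j (2*(i+1)) (n-(i+1)) x (by omega) he (by omega)
      · omega
      · have : 2*(i+1) + (n-(i+1)) = n + i + 1 := by omega
        omega

lemma sally_all_big (e k j n : ℕ) (hn : 2 ≤ n) (hj : 2 ≤ j) (hk : 1 ≤ k)
    (hjk : j + k + 1 ≤ e)
    (h2' : n*k + (2*n-1) ≤ (n-1)*e + n*j) :
    ∀ x, n*(e+j+k) ≤ x → x ∈ sally e k j := by
  have he : 1 ≤ e := by omega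
  have hemem : e ∈ sally e k j :=
    AddSubmonoid.subset_closure (Or.inl ⟨le_refl e, by omega⟩)
  -- N + e + 2n ≤ 2n(e+j) + 1
  have hkey : n*(e+j+k) + e + 2*n ≤ 2*n*(e+j) + 1 := by
    have h2z : (n:ℤ)*k + (2*(n:ℤ)-1) ≤ ((n:ℤ)-1)*e + (n:ℤ)*j := by
      have hn1 : 1 ≤ n := by omega
      zify [show 1 ≤ 2*n by omega, hn1] at h2'
      push_cast at h2' ⊢
      linarith
    zify
    nlinarith [h2z]
  intro x
  induction x using Nat.strong_induction_on with
  | _ x ih =>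
    intro hx
    by_cases hup : x + n + n ≤ 2*n*(e+j)
    · have hcov := sally_cover e k j n hj he hjk n (le_refl n) x hx
      apply hcov
      have : n - n = 0 := by omega
      rw [this]
      simpa using hup
    · push_neg at hup
      have hxe : n*(e+j+k) ≤ x - e := by omega
      have hex : e ≤ x := by omega
      have hmem := ih (x - e) (by omega) hxe
      have hxx : x = (x - e) + e := by omega
      rw [hxx]
      exact add_mem hmem hemem

theorem sally_not_symmetric_odd_level (e k j n : ℕ) (hn : 2 ≤ n) (hj : 2 ≤ j)
    (hk : 0 < k) (he : 0 < e) (hjk : j + k ≤ e - 1) (h2k : e < 2 * k)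
    (h1 : (n - 1) * (e - 2) + (n - 1) * j < n * k)
    (h2 : n * k ≤ (n - 1) * e + n * j - (2 * n - 1)) :
    ¬ IsSymmetricNS (sally e k j) := by
  classical
  intro hsym
  have hjk' : j + k + 1 ≤ e := by omega
  have he4 : 4 ≤ e := by omega
  set S := sally e k j with hS
  set N := n * (e + j + k) with hN
  -- clean version of h2
  have h2' : n*k + (2*n-1) ≤ (n-1)*e + n*j := by
    have h4 : (n-1)*4 ≤ (n-1)*e := Nat.mul_le_mul_left _ he4
    omega
  have hNe' : 2 * e ≤ N := by
    calc 2 * e ≤ 2 * (e + j + k) := by omega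
    _ ≤ n * (e + j + k) := Nat.mul_le_mul_right _ hn
  have hbig : ∀ x, N ≤ x → x ∈ S := sally_all_big e k j n hn hj hk hjk' h2'
  have hgap_lt : ∀ x, x ∉ S → x < N := by
    intro x hx
    by_contra hcon
    push_neg at hcon
    exact hx (hbig x hcon)
  -- the three gaps
  have hF : N - 1 ∉ S := by
    intro hmem
    obtain ⟨a, b, hL, hU⟩ := sally_bound e k j _ hmem
    exact gap_core e k j n a b 1 hn hj hk hjk' h1 (Or.inl rfl) (by omega) (by omega)
  have hNe : N - e ∉ S := by
    intro hmem
    obtain ⟨a, b, hL, hU⟩ := sally_bound e k j _ hmem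
    exact gap_core e k j n a b e hn hj hk hjk' h1 (Or.inr rfl) (by omega) (by omega)
  have hE1 : e - 1 ∉ S := by
    intro hmem
    obtain ⟨a, b, hL, hU⟩ := sally_bound e k j _ hmem
    rcases Nat.eq_zero_or_pos a with rfl | hA
    · rcases Nat.eq_zero_or_pos b with rfl | hB
      · simp at hU; omega
      · have : e + j + k ≤ b * (e+j+k) := le_mul_of_one_le_left (Nat.zero_le _) hB
        omega
    · have : e ≤ a * e := le_mul_of_one_le_left (Nat.zero_le _) hA
      omega
  -- Frobenius number
  have hFrob : frobeniusNumber S = N - 1 := by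
    have hmem : (N - 1 : ℕ) ∈ gapsOf S := hF
    have hbdd : ∀ y ∈ gapsOf S, y ≤ N - 1 := by
      intro y hy
      have := hgap_lt y hy
      omega
    exact le_antisymm (csSup_le ⟨N-1, hmem⟩ hbdd) (le_csSup ⟨N-1, fun y hy => hbdd y hy⟩ hmem)
  -- counting
  set B := (Finset.range N).filter (fun x => x ∉ S) with hB
  set A := (Finset.range N).filter (fun x => x ∈ S) with hA
  have hsetB : gapsOf S = ↑B := by
    ext x
    simp only [hB, gapsOf, Set.mem_setOf_eq, Finset.coe_filter, Finset.mem_range]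
    exact ⟨fun h => ⟨hgap_lt x h, h⟩, fun h => h.2⟩
  have hgenus : genusOf S = B.card := by
    rw [genusOf, hsetB, Nat.card_coe_set_eq, Set.ncard_coe_finset]
  have hcardAB : A.card + B.card = N := by
    rw [hA, hB]
    rw [Finset.card_filter_add_card_filter_not]
    exact Finset.card_range N
  set D := A.image (fun x => N - 1 - x) with hD
  have hDB : D ⊆ B := by
    intro y hy
    simp only [hD, Finset.mem_image, hA, Finset.mem_filter, Finset.mem_range] at hy
    obtain ⟨x, ⟨hxN, hxS⟩, rfl⟩ := hy
    simp only [hB, Finset.mem_filter, Finset.mem_range]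
    refine ⟨by omega, fun hyS => ?_⟩
    have : x + (N - 1 - x) ∈ S := add_mem hxS hyS
    have hxy : x + (N - 1 - x) = N - 1 := by omega
    rw [hxy] at this
    exact hF this
  have hcardD : D.card = A.card := by
    rw [hD]
    apply Finset.card_image_of_injOn
    intro x hx y hy hxy
    simp only [hA, Finset.mem_coe, Finset.mem_filter, Finset.mem_range] at hx hy
    simp only at hxy
    omega
  have hE1B : e - 1 ∈ B := by
    simp only [hB, Finset.mem_filter, Finset.mem_range]
    exact ⟨by omega, hE1⟩
  have hE1D : e - 1 ∉ D := by
    simp only [hD, Finset.mem_image, hA, Finset.mem_filter, Finset.mem_range]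
    rintro ⟨x, ⟨hxN, hxS⟩, hxe⟩
    have : x = N - e := by omega
    subst this
    exact hNe hxS
  have hDltB : D.card < B.card :=
    Finset.card_lt_card ⟨hDB, fun hcon => hE1D (hcon hE1B)⟩
  rw [IsSymmetricNS, hgenus, hFrob] at hsym
  have hN1 : 1 ≤ N := by omega
  have hsym' : 2 * B.card = N := by omega
  omega
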